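/- arXiv:2106.15819 — 2 statements merged into one kernel-verified Lean document; each statement's English description precedes it below -/
import Mathlib

section
/- Let ω be a full-rank state satisfying the transportation cost inequality ‖ρ-ω‖_{W₁} ≤ √(c·S(ρ‖ω)) for all states ρ, and let O be a self-adjoint operator commuting with ω with Tr[ωO] = 0 and ‖O‖_L ≤ 1 (in the dual-Lipschitz sense ‖ρ-ω‖_{W₁} ≥ |Tr[(ρ-ω)O]|). Then for every r ≥ 0, the probability (under the spectral measure of O in the state ω) that |O| ≥ r is at most 2·exp(-r²/c). -/
open scoped ComplexOrder

/-- The trace norm `‖A‖₁ = Tr √(A†A)` (sum of singular values). -/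
noncomputable def traceNorm {m : Type*} [Fintype m] [DecidableEq m] (A : Matrix m m ℂ) : ℝ :=
  ∑ i, Real.sqrt ((Matrix.posSemidef_conjTranspose_mul_self A).1.eigenvalues i)

/-- A quantum state (density matrix): positive semidefinite with unit trace. -/
def IsState {m : Type*} [Fintype m] (ρ : Matrix m m ℂ) : Prop :=
  ρ.PosSemidef ∧ Matrix.trace ρ = 1

/-- Matrix logarithm via the spectral decomposition (junk value `0` off the
Hermitian matrices; on eigenvalue `0` we use `Real.log 0 = 0`, matching the
convention `0 · log 0 = 0` on the support). -/
noncomputable def Matrix.mlog {m : Type*} [Fintype m] [DecidableEq m]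
    (A : Matrix m m ℂ) : Matrix m m ℂ :=
  if hA : A.IsHermitian then
    (hA.eigenvectorUnitary : Matrix m m ℂ) *
      Matrix.diagonal (fun i => (Real.log (hA.eigenvalues i) : ℂ)) *
      (star (hA.eigenvectorUnitary : Matrix m m ℂ))
  else 0

/-- Umegaki's relative entropy `S(ρ‖ω) = Tr[ρ (ln ρ - ln ω)]`. -/
noncomputable def relEnt {m : Type*} [Fintype m] [DecidableEq m] (ρ ω : Matrix m m ℂ) : ℝ :=
  (Matrix.trace (ρ * (ρ.mlog - ω.mlog))).re

/-- Von Neumann entropy `S(ρ) = -Tr[ρ ln ρ]`. -/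
noncomputable def vnEnt {m : Type*} [Fintype m] [DecidableEq m] (ρ : Matrix m m ℂ) : ℝ :=
  -(Matrix.trace (ρ * ρ.mlog)).re

/-- `ℙ_ω(|O| ≥ r)`: the probability of measuring an eigenvalue `λ` of the observable `O`
with `|λ| ≥ r` in the state `ω` (junk value `0` for non-Hermitian `O`). -/
noncomputable def probAbsGE {m : Type*} [Fintype m] [DecidableEq m]
    (ω O : Matrix m m ℂ) (r : ℝ) : ℝ :=
  if hO : O.IsHermitian then
    ∑ i ∈ Finset.univ.filter (fun i => r ≤ |hO.eigenvalues i|),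
      (Matrix.trace (ω * ((hO.eigenvectorUnitary : Matrix m m ℂ) *
        Matrix.single i i 1 * star (hO.eigenvectorUnitary : Matrix m m ℂ)))).re
  else 0

open Matrix in
private lemma funcalc_congr {m : Type*} [Fintype m] [DecidableEq m] (f : ℝ → ℝ)
    {V W : Matrix m m ℂ} (hV : V ∈ Matrix.unitaryGroup m ℂ) (hW : W ∈ Matrix.unitaryGroup m ℂ)
    {d e : m → ℝ}
    (h : V * diagonal (fun i => (d i : ℂ)) * star V = W * diagonal (fun i => (e i : ℂ)) * star W) :
    V * diagonal (fun i => (f (d i) : ℂ)) * star V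
      = W * diagonal (fun i => (f (e i) : ℂ)) * star W := by
  have hV1 : V * star V = 1 := Matrix.mem_unitaryGroup_iff.mp hV
  have hV2 : star V * V = 1 := Matrix.mem_unitaryGroup_iff'.mp hV
  have hW1 : W * star W = 1 := Matrix.mem_unitaryGroup_iff.mp hW
  have hW2 : star W * W = 1 := Matrix.mem_unitaryGroup_iff'.mp hW
  set S : Matrix m m ℂ := star W * V with hS
  have e1 : star W * (V * diagonal (fun i => (d i : ℂ)) * star V) * V
      = (S * diagonal (fun i => (d i : ℂ))) * (star V * V) := by
    simp only [hS, Matrix.mul_assoc]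
  have e2 : star W * (W * diagonal (fun i => (e i : ℂ)) * star W) * V
      = (star W * W) * (diagonal (fun i => (e i : ℂ)) * S) := by
    simp only [hS, Matrix.mul_assoc]
  have key : S * diagonal (fun i => (d i : ℂ)) = diagonal (fun i => (e i : ℂ)) * S := by
    have e0 := congrArg (fun X => star W * X * V) h
    rw [e1, e2, hV2, hW2, Matrix.mul_one, Matrix.one_mul] at e0
    exact e0
  have key2 : S * diagonal (fun i => (f (d i) : ℂ))
      = diagonal (fun i => (f (e i) : ℂ)) * S := by
    ext i j
    have hij := congrFun (congrFun key i) j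
    simp only [Matrix.mul_apply, Matrix.diagonal_apply, ite_mul, mul_ite, zero_mul, mul_zero,
      Finset.sum_ite_eq, Finset.sum_ite_eq', Finset.mem_univ, if_true] at hij ⊢
    rcases eq_or_ne (S i j) 0 with h0 | h0
    · simp [h0]
    · have hde : (d j : ℂ) = (e i : ℂ) :=
        mul_left_cancel₀ h0 (by rw [hij, mul_comm])
      have : d j = e i := by exact_mod_cast hde
      rw [this, mul_comm]
  calc V * diagonal (fun i => (f (d i) : ℂ)) * star V
      = (W * star W) * V * diagonal (fun i => (f (d i) : ℂ)) * star V := by rw [hW1, Matrix.one_mul]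
    _ = W * (S * diagonal (fun i => (f (d i) : ℂ))) * star V := by
        simp only [hS, Matrix.mul_assoc]
    _ = W * (diagonal (fun i => (f (e i) : ℂ)) * S) * star V := by rw [key2]
    _ = W * diagonal (fun i => (f (e i) : ℂ)) * star W * (V * star V) := by
        simp only [hS, Matrix.mul_assoc]
    _ = W * diagonal (fun i => (f (e i) : ℂ)) * star W := by rw [hV1, Matrix.mul_one]

open Matrix in
private lemma diag_of_onb {m : Type*} [Fintype m] [DecidableEq m] (M : Matrix m m ℂ)
    (bb : OrthonormalBasis m ℂ (EuclideanSpace ℂ m)) (v : m → ℝ)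
    (h : ∀ j, M *ᵥ ⇑(bb j) = (v j : ℂ) • ⇑(bb j)) :
    M = ((EuclideanSpace.basisFun m ℂ).toBasis.toMatrix ⇑bb) *
        diagonal (fun i => (v i : ℂ)) *
        star ((EuclideanSpace.basisFun m ℂ).toBasis.toMatrix ⇑bb) := by
  set V : Matrix m m ℂ := (EuclideanSpace.basisFun m ℂ).toBasis.toMatrix ⇑bb with hV
  have hVU : V ∈ Matrix.unitaryGroup m ℂ :=
    (EuclideanSpace.basisFun m ℂ).toMatrix_orthonormalBasis_mem_unitary bb
  have hV1 : V * star V = 1 := Matrix.mem_unitaryGroup_iff.mp hVU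
  have hV2 : star V * V = 1 := Matrix.mem_unitaryGroup_iff'.mp hVU
  have hVapp : ∀ i j, V i j = bb j i := fun i j => rfl
  have hVs : ∀ j, V *ᵥ Pi.single j 1 = ⇑(bb j) := by
    intro j
    funext i
    simp [Matrix.mulVec_single, hVapp]
  have hVs' : ∀ j, star V *ᵥ ⇑(bb j) = Pi.single j 1 := by
    intro j
    rw [← hVs, Matrix.mulVec_mulVec, hV2, Matrix.one_mulVec]
  have key : star V * M * V = diagonal (fun i => (v i : ℂ)) := by
    apply Matrix.toEuclideanLin.injective
    apply Module.Basis.ext (EuclideanSpace.basisFun m ℂ).toBasis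
    intro i
    simp only [Matrix.toEuclideanLin_apply, OrthonormalBasis.coe_toBasis,
      EuclideanSpace.basisFun_apply, PiLp.ofLp_single, ← Matrix.mulVec_mulVec,
      hVs, h, Matrix.diagonal_mulVec_single, Matrix.mulVec_smul, hVs',
      WithLp.toLp_smul, PiLp.toLp_single, mul_one]
    apply PiLp.ext
    intro j
    simp only [PiLp.smul_apply, EuclideanSpace.single_apply, smul_eq_mul, mul_ite, mul_one,
      mul_zero, PiLp.toLp_single, EuclideanSpace.single_apply]
  calc M = (V * star V) * M * (V * star V) := by rw [hV1, Matrix.one_mul, Matrix.mul_one]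
    _ = V * (star V * M * V) * star V := by simp only [Matrix.mul_assoc]
    _ = V * diagonal (fun i => (v i : ℂ)) * star V := by rw [key]

open Matrix in
private lemma sim_diag {m : Type*} [Fintype m] [DecidableEq m] {A B : Matrix m m ℂ}
    (hA : A.IsHermitian) (hB : B.IsHermitian) (hAB : A * B = B * A) :
    ∃ (V : Matrix m m ℂ) (_ : V ∈ Matrix.unitaryGroup m ℂ) (a b : m → ℝ),
      A = V * diagonal (fun i => (a i : ℂ)) * star V ∧
      B = V * diagonal (fun i => (b i : ℂ)) * star V := by
  classical
  have hA' : (Matrix.toEuclideanLin A).IsSymmetric := Matrix.isHermitian_iff_isSymmetric.mp hA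
  have hB' : (Matrix.toEuclideanLin B).IsSymmetric := Matrix.isHermitian_iff_isSymmetric.mp hB
  have hcomm : Commute (Matrix.toEuclideanLin A) (Matrix.toEuclideanLin B) := by
    have hmul : ∀ (X Y : Matrix m m ℂ),
        (Matrix.toEuclideanLin X) ∘ₗ (Matrix.toEuclideanLin Y)
          = Matrix.toEuclideanLin (X * Y) := by
      intro X Y
      apply LinearMap.ext
      intro v
      simp [Matrix.toEuclideanLin_apply, Matrix.mulVec_mulVec]
    show _ * _ = _ * _
    rw [Module.End.mul_eq_comp, Module.End.mul_eq_comp, hmul, hmul, hAB]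
  set Vfam : ℂ × ℂ → Submodule ℂ (EuclideanSpace ℂ m) := fun μ =>
    Module.End.eigenspace (Matrix.toEuclideanLin A) μ.2
      ⊓ Module.End.eigenspace (Matrix.toEuclideanLin B) μ.1 with hVfam
  have internal : DirectSum.IsInternal Vfam :=
    LinearMap.IsSymmetric.directSum_isInternal_of_commute hA' hB' hcomm
  have orth := LinearMap.IsSymmetric.orthogonalFamily_eigenspace_inf_eigenspace hA' hB'
  have indep : iSupIndep Vfam := internal.submodule_iSupIndep
  letI : Fintype {μ : ℂ × ℂ // Vfam μ ≠ ⊥} := indep.fintypeNeBotOfFiniteDimensional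
  set ι := {μ : ℂ × ℂ // Vfam μ ≠ ⊥} with hι
  have internal' : DirectSum.IsInternal (fun μ : ι => Vfam μ) := by
    rw [DirectSum.isInternal_submodule_iff_iSupIndep_and_iSup_eq_top]
    constructor
    · exact indep.comp Subtype.val_injective
    · rw [iSup_ne_bot_subtype]
      exact (DirectSum.isInternal_submodule_iff_iSupIndep_and_iSup_eq_top Vfam).mp internal |>.2
  have orth' := orth.comp (Subtype.val_injective : Function.Injective ((↑) : ι → ℂ × ℂ))
  have hn : Module.finrank ℂ (EuclideanSpace ℂ m) = Fintype.card m := finrank_euclideanSpace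
  set b0 := internal'.subordinateOrthonormalBasis hn orth' with hb0
  set e : Fin (Fintype.card m) ≃ m := Fintype.equivOfCardEq (Fintype.card_fin _) with he
  set bb := b0.reindex e with hbb
  set idx : m → ℂ × ℂ := fun j =>
    (internal'.subordinateOrthonormalBasisIndex hn (e.symm j) orth' : ι) with hidx
  have hmem : ∀ j, (bb j : EuclideanSpace ℂ m) ∈ Vfam (idx j) := by
    intro j
    have := internal'.subordinateOrthonormalBasis_subordinate hn (e.symm j) orth'
    simpa [hbb, hb0, hidx] using this
  have hbbne : ∀ j, (bb j : EuclideanSpace ℂ m) ≠ 0 := by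
    intro j h
    exact absurd (by simpa using h) (bb.toBasis.ne_zero j)
  have hmemA : ∀ j, (bb j : EuclideanSpace ℂ m)
      ∈ Module.End.eigenspace (Matrix.toEuclideanLin A) (idx j).2 := fun j => (hmem j).1
  have hmemB : ∀ j, (bb j : EuclideanSpace ℂ m)
      ∈ Module.End.eigenspace (Matrix.toEuclideanLin B) (idx j).1 := fun j => (hmem j).2
  have hrealA : ∀ j, (((idx j).2.re : ℂ)) = (idx j).2 := by
    intro j
    rw [← Complex.conj_eq_iff_re]
    exact hA'.conj_eigenvalue_eq_self
      (Module.End.hasEigenvalue_of_hasEigenvector ⟨hmemA j, hbbne j⟩)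
  have hrealB : ∀ j, (((idx j).1.re : ℂ)) = (idx j).1 := by
    intro j
    rw [← Complex.conj_eq_iff_re]
    exact hB'.conj_eigenvalue_eq_self
      (Module.End.hasEigenvalue_of_hasEigenvector ⟨hmemB j, hbbne j⟩)
  set a : m → ℝ := fun j => (idx j).2.re with ha
  set bvals : m → ℝ := fun j => (idx j).1.re with hbv
  have hAv : ∀ j, A *ᵥ ⇑(bb j) = (a j : ℂ) • ⇑(bb j) := by
    intro j
    have h1 := Module.End.mem_eigenspace_iff.mp (hmemA j)
    rw [ha]
    simp only [hrealA j]
    simpa only [Matrix.toEuclideanLin_apply, WithLp.ofLp_smul] using congrArg (fun x : EuclideanSpace ℂ m => ⇑x) h1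
  have hBv : ∀ j, B *ᵥ ⇑(bb j) = (bvals j : ℂ) • ⇑(bb j) := by
    intro j
    have h1 := Module.End.mem_eigenspace_iff.mp (hmemB j)
    rw [hbv]
    simp only [hrealB j]
    simpa only [Matrix.toEuclideanLin_apply, WithLp.ofLp_smul] using congrArg (fun x : EuclideanSpace ℂ m => ⇑x) h1
  refine ⟨(EuclideanSpace.basisFun m ℂ).toBasis.toMatrix ⇑bb,
    (EuclideanSpace.basisFun m ℂ).toMatrix_orthonormalBasis_mem_unitary bb, a, bvals,
    diag_of_onb A bb a hAv, diag_of_onb B bb bvals hBv⟩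

open Matrix in
private lemma herm_of_rep {m : Type*} [Fintype m] [DecidableEq m] {A V : Matrix m m ℂ} {d : m → ℝ}
    (h : A = V * diagonal (fun i => (d i : ℂ)) * star V) : A.IsHermitian := by
  rw [h]
  unfold Matrix.IsHermitian
  simp only [Matrix.conjTranspose_mul, Matrix.diagonal_conjTranspose, Matrix.star_eq_conjTranspose,
    Matrix.mul_assoc, Matrix.conjTranspose_conjTranspose]
  have : (star fun i => ((d i : ℝ) : ℂ)) = fun i => ((d i : ℝ) : ℂ) := by
    funext i
    simp [Complex.star_def, Complex.conj_ofReal]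
  rw [this]

open Matrix in
private lemma mlog_eq {m : Type*} [Fintype m] [DecidableEq m] {A V : Matrix m m ℂ}
    (hV : V ∈ Matrix.unitaryGroup m ℂ) {d : m → ℝ}
    (h : A = V * diagonal (fun i => (d i : ℂ)) * star V) :
    Matrix.mlog A = V * diagonal (fun i => (Real.log (d i) : ℂ)) * star V := by
  have hA : A.IsHermitian := herm_of_rep h
  rw [Matrix.mlog, dif_pos hA]
  have hrep : (hA.eigenvectorUnitary : Matrix m m ℂ)
      * diagonal (fun i => ((hA.eigenvalues i : ℝ) : ℂ))
      * star (hA.eigenvectorUnitary : Matrix m m ℂ)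
      = V * diagonal (fun i => (d i : ℂ)) * star V := by
    rw [← h]
    convert (hA.spectral_theorem).symm using 3
    simp [Function.comp_def]
  exact funcalc_congr Real.log (SetLike.coe_mem _) hV hrep

open Matrix in
private lemma trace_two_diag {m : Type*} [Fintype m] [DecidableEq m] {V : Matrix m m ℂ}
    (hV : V ∈ Matrix.unitaryGroup m ℂ) (x y : m → ℂ) :
    Matrix.trace ((V * diagonal x * star V) * (V * diagonal y * star V))
      = ∑ i, x i * y i := by
  have hV2 : star V * V = 1 := Matrix.mem_unitaryGroup_iff'.mp hV
  have : (V * diagonal x * star V) * (V * diagonal y * star V)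
      = V * (diagonal x * diagonal y) * star V := by
    calc (V * diagonal x * star V) * (V * diagonal y * star V)
        = V * diagonal x * ((star V * V) * (diagonal y * star V)) := by
          simp only [Matrix.mul_assoc]
      _ = V * (diagonal x * diagonal y) * star V := by
          rw [hV2, Matrix.one_mul]; simp only [Matrix.mul_assoc]
  rw [this, Matrix.trace_mul_cycle, ← Matrix.mul_assoc, hV2, Matrix.one_mul,
    Matrix.diagonal_mul_diagonal, Matrix.trace_diagonal]

open Matrix in
private lemma trace_one_diag {m : Type*} [Fintype m] [DecidableEq m] {V : Matrix m m ℂ}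
    (hV : V ∈ Matrix.unitaryGroup m ℂ) (x : m → ℂ) :
    Matrix.trace (V * diagonal x * star V) = ∑ i, x i := by
  have hV2 : star V * V = 1 := Matrix.mem_unitaryGroup_iff'.mp hV
  rw [Matrix.trace_mul_cycle, hV2, Matrix.one_mul, Matrix.trace_diagonal]

open Matrix in
private lemma trace_conj_form {m : Type*} [Fintype m] [DecidableEq m] (ω U X : Matrix m m ℂ) :
    Matrix.trace (ω * (U * X * star U)) = Matrix.trace ((star U * ω * U) * X) := by
  have h1 : ω * (U * X * star U) = (ω * U) * X * star U := by simp only [Matrix.mul_assoc]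
  rw [h1, Matrix.trace_mul_cycle]
  simp only [Matrix.mul_assoc]

open Matrix in
private lemma trace_std' {m : Type*} [Fintype m] [DecidableEq m] (N : Matrix m m ℂ) (i : m) :
    Matrix.trace (N * Matrix.single i i 1) = N i i := by
  simp [Matrix.trace, Matrix.diag, Matrix.mul_apply, Matrix.single, ite_and]

open Matrix in
private lemma trace_mul_diag {m : Type*} [Fintype m] [DecidableEq m] (N : Matrix m m ℂ)
    (v : m → ℂ) : Matrix.trace (N * diagonal v) = ∑ i, N i i * v i := by
  simp [Matrix.trace, Matrix.diag, Matrix.mul_apply, Matrix.diagonal_apply, mul_ite]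

open Matrix in
private lemma psd_diag_re_nonneg {m : Type*} [Fintype m] [DecidableEq m] {N : Matrix m m ℂ}
    (h : N.PosSemidef) (i : m) : 0 ≤ (N i i).re := by
  exact (Complex.le_def.mp (h.diag_nonneg (i := i))).1

/-- Gaussian concentration for observables commuting with `ω`: if the full-rank state `ω`
satisfies `TC(c)` and `O` is self-adjoint, commutes with `ω`, has `Tr[ωO] = 0` and
Lipschitz constant at most `1` in the dual sense, then
`ℙ_ω(|O| ≥ r) ≤ 2·exp(-r²/c)` for all `r ≥ 0`. -/
theorem gaussian_concentration_commuting {m : Type*} [Fintype m] [DecidableEq m]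
    (ω : Matrix m m ℂ) (hω : ω.PosDef) (hωtr : Matrix.trace ω = 1)
    (c : ℝ) (hc : 0 < c)
    (w1 : Matrix m m ℂ → ℝ)
    (hTC : ∀ ρ, IsState ρ → w1 (ρ - ω) ≤ Real.sqrt (c * relEnt ρ ω))
    (O : Matrix m m ℂ) (hO : O.IsHermitian) (hcomm : O * ω = ω * O)
    (hO0 : Matrix.trace (ω * O) = 0)
    (hLip : ∀ ρ, IsState ρ → |(Matrix.trace ((ρ - ω) * O)).re| ≤ w1 (ρ - ω)) :
    ∀ r : ℝ, 0 ≤ r → probAbsGE ω O r ≤ 2 * Real.exp (-(r ^ 2) / c) := by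
  classical
  obtain ⟨V, hVU, a, lam, hωV, hOV⟩ := sim_diag hω.1 hO hcomm.symm
  have hV1 : V * star V = 1 := Matrix.mem_unitaryGroup_iff.mp hVU
  have hV2 : star V * V = 1 := Matrix.mem_unitaryGroup_iff'.mp hVU
  -- the diagonal entries of ω in the common eigenbasis
  have hdiag : star V * ω * V = Matrix.diagonal (fun i => (a i : ℂ)) := by
    rw [hωV]
    calc star V * (V * Matrix.diagonal (fun i => (a i : ℂ)) * star V) * V
        = (star V * V) * Matrix.diagonal (fun i => (a i : ℂ)) * (star V * V) := by
          simp only [Matrix.mul_assoc]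
      _ = Matrix.diagonal (fun i => (a i : ℂ)) := by
          rw [hV2, Matrix.one_mul, Matrix.mul_one]
  have haK : ∀ i, 0 ≤ a i := by
    intro i
    have hpsd : (star V * ω * V).PosSemidef := by
      have := hω.posSemidef.mul_mul_conjTranspose_same (star V)
      simpa [Matrix.star_eq_conjTranspose, Matrix.conjTranspose_conjTranspose] using this
    rw [hdiag] at hpsd
    have := psd_diag_re_nonneg hpsd i
    simpa using this
  have hsuma : ∑ i, a i = 1 := by
    have h1 := trace_one_diag hVU (fun i => (a i : ℂ))
    rw [← hωV, hωtr] at h1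
    exact_mod_cast h1.symm
  have hsumal : ∑ i, a i * lam i = 0 := by
    have h1 := trace_two_diag hVU (fun i => (a i : ℂ)) (fun i => (lam i : ℂ))
    rw [← hωV, ← hOV, hO0] at h1
    have : ((∑ i, a i * lam i : ℝ) : ℂ) = 0 := by
      push_cast
      exact h1.symm
    exact_mod_cast this
  set Z : ℝ → ℝ := fun θ => ∑ i, a i * Real.exp (θ * lam i) with hZdef
  have hZpos : ∀ θ, 0 < Z θ := by
    intro θ
    have hex : ∃ i, 0 < a i := by
      by_contra hno
      push_neg at hno
      have : (∑ i, a i) ≤ 0 := Finset.sum_nonpos (fun i _ => hno i)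
      linarith
    obtain ⟨i0, hi0⟩ := hex
    exact Finset.sum_pos' (fun i _ => mul_nonneg (haK i) (Real.exp_pos _).le)
      ⟨i0, Finset.mem_univ _, mul_pos hi0 (Real.exp_pos _)⟩
  -- the key sub-Gaussian bound on the log-Laplace transform
  have hkey : ∀ θ : ℝ, Real.log (Z θ) ≤ c * θ ^ 2 / 4 := by
    intro θ
    set q : m → ℝ := fun i => a i * Real.exp (θ * lam i) / Z θ with hqdef
    have hqnn : ∀ i, 0 ≤ q i := fun i =>
      div_nonneg (mul_nonneg (haK i) (Real.exp_pos _).le) (hZpos θ).le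
    have hqsum : ∑ i, q i = 1 := by
      rw [hqdef]
      rw [← Finset.sum_div]
      exact div_self (hZpos θ).ne'
    set ρ : Matrix m m ℂ := V * Matrix.diagonal (fun i => (q i : ℂ)) * star V with hρdef
    have hρstate : IsState ρ := by
      constructor
      · rw [hρdef]
        have hd : (Matrix.diagonal (fun i => (q i : ℂ))).PosSemidef := by
          rw [Matrix.posSemidef_diagonal_iff]
          intro i
          exact_mod_cast Complex.zero_le_real.mpr (hqnn i)
        have := hd.mul_mul_conjTranspose_same V
        simpa [Matrix.star_eq_conjTranspose] using this
      · rw [hρdef, trace_one_diag hVU]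
        exact_mod_cast congrArg (fun x : ℝ => (x : ℂ)) hqsum
    have hmlogρ : Matrix.mlog ρ
        = V * Matrix.diagonal (fun i => (Real.log (q i) : ℂ)) * star V := mlog_eq hVU hρdef
    have hmlogω : Matrix.mlog ω
        = V * Matrix.diagonal (fun i => (Real.log (a i) : ℂ)) * star V := mlog_eq hVU hωV
    have hrel : relEnt ρ ω = ∑ i, q i * (Real.log (q i) - Real.log (a i)) := by
      have hsub : Matrix.mlog ρ - Matrix.mlog ω
          = V * Matrix.diagonal (fun i => ((Real.log (q i) - Real.log (a i) : ℝ) : ℂ)) * star V := by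
        rw [hmlogρ, hmlogω, ← Matrix.sub_mul, ← Matrix.mul_sub, Matrix.diagonal_sub]
        congr 1
        congr 1
        congr 1
        funext i
        push_cast
        ring
      rw [relEnt, hsub, hρdef, trace_two_diag hVU]
      have hcast : (∑ i, ((q i : ℂ)) * ((Real.log (q i) - Real.log (a i) : ℝ) : ℂ))
          = ((∑ i, q i * (Real.log (q i) - Real.log (a i)) : ℝ) : ℂ) := by push_cast; ring
      rw [hcast, Complex.ofReal_re]
    have hT : (Matrix.trace ((ρ - ω) * O)).re = ∑ i, q i * lam i := by
      rw [Matrix.sub_mul, Matrix.trace_sub, hO0, hρdef, hOV, trace_two_diag hVU]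
      have : (∑ i, ((q i : ℂ)) * ((lam i : ℂ))) = ((∑ i, q i * lam i : ℝ) : ℂ) := by push_cast; ring
      rw [this, sub_zero, Complex.ofReal_re]
    have hDval : relEnt ρ ω = θ * (∑ i, q i * lam i) - Real.log (Z θ) := by
      rw [hrel]
      have hpt : ∀ i, q i * (Real.log (q i) - Real.log (a i))
          = q i * (θ * lam i) - q i * Real.log (Z θ) := by
        intro i
        rcases eq_or_lt_of_le (haK i) with h0 | h0
        · have hq0 : q i = 0 := by rw [hqdef]; simp [← h0]
          simp [hq0]
        · have hq0 : 0 < q i := div_pos (mul_pos h0 (Real.exp_pos _)) (hZpos θ)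
          have hlq : Real.log (q i)
              = Real.log (a i) + θ * lam i - Real.log (Z θ) := by
            rw [hqdef]
            rw [Real.log_div (mul_pos h0 (Real.exp_pos _)).ne' (hZpos θ).ne',
              Real.log_mul h0.ne' (Real.exp_pos _).ne', Real.log_exp]
          rw [hlq]
          ring
      rw [Finset.sum_congr rfl (fun i _ => hpt i), Finset.sum_sub_distrib]
      have h1 : ∑ i, q i * (θ * lam i) = θ * ∑ i, q i * lam i := by
        rw [Finset.mul_sum]
        exact Finset.sum_congr rfl (fun i _ => by ring)
      have h2 : ∑ i, q i * Real.log (Z θ) = Real.log (Z θ) := by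
        rw [← Finset.sum_mul, hqsum, one_mul]
      rw [h1, h2]
    have hDnn : 0 ≤ relEnt ρ ω := by
      rw [hrel]
      have hpt : ∀ i, q i - a i ≤ q i * (Real.log (q i) - Real.log (a i)) := by
        intro i
        rcases eq_or_lt_of_le (haK i) with h0 | h0
        · have hq0 : q i = 0 := by rw [hqdef]; simp [← h0]
          simp [hq0, ← h0]
        · have hq0 : 0 < q i := div_pos (mul_pos h0 (Real.exp_pos _)) (hZpos θ)
          have hlog : Real.log (a i) - Real.log (q i) ≤ a i / q i - 1 := by
            rw [← Real.log_div h0.ne' hq0.ne']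
            exact Real.log_le_sub_one_of_pos (div_pos h0 hq0)
          have h2 : 1 - a i / q i ≤ Real.log (q i) - Real.log (a i) := by linarith
          have h3 := mul_le_mul_of_nonneg_left h2 hq0.le
          calc q i - a i = q i * (1 - a i / q i) := by field_simp
            _ ≤ q i * (Real.log (q i) - Real.log (a i)) := h3
      calc (0 : ℝ) = ∑ i, (q i - a i) := by
            rw [Finset.sum_sub_distrib, hqsum, hsuma]; ring
        _ ≤ ∑ i, q i * (Real.log (q i) - Real.log (a i)) :=
            Finset.sum_le_sum (fun i _ => hpt i)
    -- apply the transportation cost and Lipschitz hypotheses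
    have hchain : |∑ i, q i * lam i| ≤ Real.sqrt (c * relEnt ρ ω) := by
      rw [← hT]
      exact le_trans (hLip ρ hρstate) (hTC ρ hρstate)
    set T : ℝ := ∑ i, q i * lam i with hTdef
    set D : ℝ := relEnt ρ ω with hDdef
    have hsq : Real.sqrt (c * D) ^ 2 = c * D := Real.sq_sqrt (mul_nonneg hc.le hDnn)
    have hsnn : 0 ≤ Real.sqrt (c * D) := Real.sqrt_nonneg _
    have h2 : θ * T ≤ |θ| * Real.sqrt (c * D) := by
      calc θ * T ≤ |θ * T| := le_abs_self _
        _ = |θ| * |T| := abs_mul _ _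
        _ ≤ |θ| * Real.sqrt (c * D) :=
            mul_le_mul_of_nonneg_left hchain (abs_nonneg _)
    have h3 : |θ| * Real.sqrt (c * D) ≤ c * θ ^ 2 / 4 + D := by
      have h4 := sq_nonneg (c * |θ| - 2 * Real.sqrt (c * D))
      have h5 : c * (|θ| * Real.sqrt (c * D)) ≤ c * (c * |θ| ^ 2 / 4 + D) := by
        nlinarith [hsq, h4]
      rw [sq_abs θ] at h5
      exact le_of_mul_le_mul_left h5 hc
    have hlog : Real.log (Z θ) = θ * T - D := by linarith [hDval]
    linarith
  -- spectral data of O and the classical Chernoff bound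
  intro r hr
  simp only [probAbsGE]
  rw [dif_pos hO]
  set U : Matrix m m ℂ := (hO.eigenvectorUnitary : Matrix m m ℂ) with hUdef
  have hUU : U ∈ Matrix.unitaryGroup m ℂ := SetLike.coe_mem _
  set μ : m → ℝ := hO.eigenvalues with hμdef
  set t : m → ℝ := fun i =>
    (Matrix.trace (ω * (U * Matrix.single i i 1 * star U))).re with htdef
  show ∑ i ∈ Finset.univ.filter (fun i => r ≤ |μ i|), t i ≤ 2 * Real.exp (-(r ^ 2) / c)
  have hN : ∀ i, Matrix.trace (ω * (U * Matrix.single i i 1 * star U))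
      = (star U * ω * U) i i := by
    intro i
    rw [trace_conj_form, trace_std']
  have hNpsd : (star U * ω * U).PosSemidef := by
    have := hω.posSemidef.mul_mul_conjTranspose_same (star U)
    simpa [Matrix.star_eq_conjTranspose, Matrix.conjTranspose_conjTranspose] using this
  have htnn : ∀ i, 0 ≤ t i := by
    intro i
    have : t i = ((star U * ω * U) i i).re := by rw [htdef]; simp only; rw [hN i]
    rw [this]
    exact psd_diag_re_nonneg hNpsd i
  have hOU : O = U * Matrix.diagonal (fun i => (μ i : ℂ)) * star U := by
    convert hO.spectral_theorem using 3
    simp [Function.comp_def]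
    rfl
  have hZU : ∀ θ : ℝ, ∑ i, t i * Real.exp (θ * μ i) = Z θ := by
    intro θ
    have hfc := funcalc_congr (fun x => Real.exp (θ * x)) hUU hVU (hOU.symm.trans hOV)
    have h1 : Matrix.trace (ω *
          (U * Matrix.diagonal (fun i => ((Real.exp (θ * μ i) : ℝ) : ℂ)) * star U))
        = ((Z θ : ℝ) : ℂ) := by
      rw [hfc]
      conv_lhs => rw [hωV]
      rw [trace_two_diag hVU]
      simp only [hZdef]
      push_cast
      rfl
    have h2 : Matrix.trace (ω *
          (U * Matrix.diagonal (fun i => ((Real.exp (θ * μ i) : ℝ) : ℂ)) * star U))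
        = ∑ i, (star U * ω * U) i i * ((Real.exp (θ * μ i) : ℝ) : ℂ) := by
      rw [trace_conj_form, trace_mul_diag]
    calc ∑ i, t i * Real.exp (θ * μ i)
        = ∑ i, ((star U * ω * U) i i * ((Real.exp (θ * μ i) : ℝ) : ℂ)).re := by
          apply Finset.sum_congr rfl
          intro i _
          have hti : t i = ((star U * ω * U) i i).re := by rw [htdef]; simp only; rw [hN i]
          rw [mul_comm ((star U * ω * U) i i), Complex.re_ofReal_mul, hti]
          ring
      _ = (∑ i, (star U * ω * U) i i * ((Real.exp (θ * μ i) : ℝ) : ℂ)).re := by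
          rw [Complex.re_sum]
      _ = (((Z θ : ℝ) : ℂ)).re := by rw [← h2, h1]
      _ = Z θ := Complex.ofReal_re _
  have hZle : ∀ θ : ℝ, Z θ ≤ Real.exp (c * θ ^ 2 / 4) := by
    intro θ
    calc Z θ = Real.exp (Real.log (Z θ)) := (Real.exp_log (hZpos θ)).symm
      _ ≤ Real.exp (c * θ ^ 2 / 4) := Real.exp_le_exp.mpr (hkey θ)
  have tailbound : ∀ (θ s : ℝ) (P : m → Prop) (_ : DecidablePred P),
      (∀ i, P i → 0 ≤ θ * μ i + s) →
      ∑ i ∈ Finset.univ.filter P, t i ≤ Real.exp s * Z θ := by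
    intro θ s P _ hP
    calc ∑ i ∈ Finset.univ.filter P, t i
        ≤ ∑ i ∈ Finset.univ.filter P, t i * Real.exp (θ * μ i + s) := by
          apply Finset.sum_le_sum
          intro i hi
          have h1 : (1 : ℝ) ≤ Real.exp (θ * μ i + s) :=
            Real.one_le_exp (hP i (Finset.mem_filter.mp hi).2)
          nlinarith [htnn i]
      _ ≤ ∑ i, t i * Real.exp (θ * μ i + s) := by
          apply Finset.sum_le_sum_of_subset_of_nonneg (Finset.filter_subset _ _)
          intro i _ _
          exact mul_nonneg (htnn i) (Real.exp_pos _).le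
      _ = Real.exp s * ∑ i, t i * Real.exp (θ * μ i) := by
          rw [Finset.mul_sum]
          apply Finset.sum_congr rfl
          intro i _
          rw [Real.exp_add]
          ring
      _ = Real.exp s * Z θ := by rw [hZU]
  have hrc : 0 ≤ r ^ 2 / c := div_nonneg (sq_nonneg r) hc.le
  have hpos : ∑ i ∈ Finset.univ.filter (fun i => r ≤ μ i), t i ≤ Real.exp (-(r ^ 2) / c) := by
    have hθp : 0 ≤ 2 * r / c := div_nonneg (by linarith) hc.le
    have hb := tailbound (2 * r / c) (-(2 * r / c * r)) (fun i => r ≤ μ i)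
      (by infer_instance) (fun i hi => by nlinarith)
    calc ∑ i ∈ Finset.univ.filter (fun i => r ≤ μ i), t i
        ≤ Real.exp (-(2 * r / c * r)) * Z (2 * r / c) := hb
      _ ≤ Real.exp (-(2 * r / c * r)) * Real.exp (c * (2 * r / c) ^ 2 / 4) :=
          mul_le_mul_of_nonneg_left (hZle _) (Real.exp_pos _).le
      _ = Real.exp (c * (2 * r / c) ^ 2 / 4 - 2 * r / c * r) := by
          rw [← Real.exp_add]
          ring_nf
      _ = Real.exp (-(r ^ 2) / c) := by
          congr 1
          field_simp
          ring
  have hneg : ∑ i ∈ Finset.univ.filter (fun i => μ i ≤ -r), t i ≤ Real.exp (-(r ^ 2) / c) := by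
    have hθm : -(2 * r / c) ≤ 0 := by
      have : 0 ≤ 2 * r / c := div_nonneg (by linarith) hc.le
      linarith
    have hb := tailbound (-(2 * r / c)) (-(2 * r / c) * r) (fun i => μ i ≤ -r)
      (by infer_instance) (fun i hi => by
        nlinarith [mul_nonneg (neg_nonneg.mpr hθm) (show 0 ≤ -(μ i + r) by linarith)])
    calc ∑ i ∈ Finset.univ.filter (fun i => μ i ≤ -r), t i
        ≤ Real.exp (-(2 * r / c) * r) * Z (-(2 * r / c)) := hb
      _ ≤ Real.exp (-(2 * r / c) * r) * Real.exp (c * (-(2 * r / c)) ^ 2 / 4) :=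
          mul_le_mul_of_nonneg_left (hZle _) (Real.exp_pos _).le
      _ = Real.exp (c * (-(2 * r / c)) ^ 2 / 4 + -(2 * r / c) * r) := by
          rw [← Real.exp_add]
          ring_nf
      _ = Real.exp (-(r ^ 2) / c) := by
          congr 1
          field_simp
          ring
  have hunion : ∀ i ∈ Finset.univ.filter (fun i => r ≤ |μ i|),
      i ∈ (Finset.univ.filter (fun i => r ≤ μ i)) ∪ (Finset.univ.filter (fun i => μ i ≤ -r)) := by
    intro i hi
    have h1 := (Finset.mem_filter.mp hi).2
    rcases le_abs.mp h1 with h | h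
    · exact Finset.mem_union_left _ (Finset.mem_filter.mpr ⟨Finset.mem_univ _, h⟩)
    · exact Finset.mem_union_right _ (Finset.mem_filter.mpr ⟨Finset.mem_univ _, by linarith⟩)
  calc ∑ i ∈ Finset.univ.filter (fun i => r ≤ |μ i|), t i
      ≤ ∑ i ∈ (Finset.univ.filter (fun i => r ≤ μ i)) ∪ (Finset.univ.filter (fun i => μ i ≤ -r)),
          t i := by
        apply Finset.sum_le_sum_of_subset_of_nonneg hunion
        intro i _ _
        exact htnn i
    _ ≤ (∑ i ∈ Finset.univ.filter (fun i => r ≤ μ i), t i)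
        + ∑ i ∈ Finset.univ.filter (fun i => μ i ≤ -r), t i := by
        have hie := Finset.sum_union_inter (s₁ := Finset.univ.filter (fun i => r ≤ μ i))
          (s₂ := Finset.univ.filter (fun i => μ i ≤ -r)) (f := t)
        have h0 : 0 ≤ ∑ i ∈ (Finset.univ.filter (fun i => r ≤ μ i))
            ∩ (Finset.univ.filter (fun i => μ i ≤ -r)), t i :=
          Finset.sum_nonneg (fun i _ => htnn i)
        linarith
    _ ≤ Real.exp (-(r ^ 2) / c) + Real.exp (-(r ^ 2) / c) := add_le_add hpos hneg
    _ = 2 * Real.exp (-(r ^ 2) / c) := by ring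
end

section
/- If a probability measure μ on a finite product space satisfies the transportation cost inequality W₁(ν,μ) ≤ √(c·S(ν‖μ)) for all ν ≪ μ, then for every function f with Lipschitz constant at most 1 (with respect to the metric defining W₁), ℙ_μ(|f(X) - E_μ[f(X)]| > t) ≤ 2·e^{-t²/c} for all t ≥ 0. -/
/-- Bobkov–Götze direction on a finite metric probability space: if `μ` satisfies the
transportation cost inequality `W₁(ν,μ) ≤ √(c·S(ν‖μ))` for all `ν ≪ μ` (expressed via
Kantorovich–Rubinstein duality: `|E_ν f - E_μ f| ≤ √(c·S(ν‖μ))` for all `1`-Lipschitz `f`),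
then every `1`-Lipschitz `f` satisfies the sub-Gaussian tail bound
`ℙ_μ(|f - E_μ f| > t) ≤ 2·e^{-t²/c}`. -/
theorem subgaussian_tail_of_transportation_cost {Ω : Type*} [Fintype Ω] [MetricSpace Ω]
    (μ : Ω → ℝ) (hμ0 : ∀ a, 0 ≤ μ a) (hμ1 : ∑ a, μ a = 1)
    (c : ℝ) (hc : 0 < c)
    (hTC : ∀ ν : Ω → ℝ, (∀ a, 0 ≤ ν a) → ∑ a, ν a = 1 → (∀ a, μ a = 0 → ν a = 0) →
      ∀ f : Ω → ℝ, LipschitzWith 1 f →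
        |∑ a, ν a * f a - ∑ a, μ a * f a| ≤
          Real.sqrt (c * ∑ a, ν a * Real.log (ν a / μ a)))
    (f : Ω → ℝ) (hf : LipschitzWith 1 f) :
    ∀ t : ℝ, 0 ≤ t →
      ∑ a ∈ Finset.univ.filter (fun a => t < |f a - ∑ b, μ b * f b|), μ a ≤
        2 * Real.exp (-(t ^ 2) / c) := by
  intro t ht
  set m := ∑ b, μ b * f b with hm
  -- Key MGF bound
  have key : ∀ θ : ℝ, ∑ a, μ a * Real.exp (θ * (f a - m)) ≤ Real.exp (c * θ ^ 2 / 4) := by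
    intro θ
    set Z := ∑ a, μ a * Real.exp (θ * (f a - m)) with hZ
    have hZpos : 0 < Z := by
      have hex : ∃ a : Ω, 0 < μ a := by
        by_contra h
        push_neg at h
        have : ∀ a : Ω, μ a = 0 := fun a => le_antisymm (h a) (hμ0 a)
        simp [this] at hμ1
      obtain ⟨a0, ha0⟩ := hex
      refine Finset.sum_pos' (fun a _ => mul_nonneg (hμ0 a) (Real.exp_pos _).le) ?_
      exact ⟨a0, Finset.mem_univ a0, mul_pos ha0 (Real.exp_pos _)⟩
    set ν := fun a => μ a * Real.exp (θ * (f a - m)) / Z with hν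
    have hν0 : ∀ a, 0 ≤ ν a := fun a =>
      div_nonneg (mul_nonneg (hμ0 a) (Real.exp_pos _).le) hZpos.le
    have hν1 : ∑ a, ν a = 1 := by
      rw [hν]
      simp only [← Finset.sum_div]
      rw [← hZ, div_self hZpos.ne']
    have hac : ∀ a, μ a = 0 → ν a = 0 := by
      intro a h; simp [hν, h]
    have hTC' := hTC ν hν0 hν1 hac f hf
    set S := ∑ a, ν a * Real.log (ν a / μ a) with hS
    rw [← hm] at hTC'
    -- entropy nonnegative
    have hent : ∀ a, ν a - μ a ≤ ν a * Real.log (ν a / μ a) := by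
      intro a
      rcases eq_or_lt_of_le (hμ0 a) with h | h
      · have h0 : ν a = 0 := hac a h.symm
        simp [h0, ← h]
      · rcases eq_or_lt_of_le (hν0 a) with h2 | h2
        · simp only [← h2, zero_mul, zero_sub]
          linarith [hμ0 a]
        · have hlog := Real.log_le_sub_one_of_pos (div_pos h h2)
          have hinv : Real.log (μ a / ν a) = -Real.log (ν a / μ a) := by
            rw [← Real.log_inv, inv_div]
          rw [hinv] at hlog
          have hmul := mul_le_mul_of_nonneg_left hlog h2.le
          have hd : ν a * (μ a / ν a) = μ a := mul_div_cancel₀ _ h2.ne'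
          nlinarith [hmul, hd]
    have hSnn : 0 ≤ S := by
      have hsum : ∑ a, (ν a - μ a) ≤ S := Finset.sum_le_sum fun a _ => hent a
      rw [Finset.sum_sub_distrib, hν1, hμ1] at hsum
      linarith
    -- entropy formula for the tilted measure
    have hSeq : S = θ * ((∑ a, ν a * f a) - m) - Real.log Z := by
      have h1 : ∀ a, ν a * Real.log (ν a / μ a)
          = ν a * (θ * (f a - m)) - ν a * Real.log Z := by
        intro a
        rcases eq_or_lt_of_le (hμ0 a) with h | h
        · have h0 : ν a = 0 := hac a h.symm
          simp [h0]
        · have hνa : ν a / μ a = Real.exp (θ * (f a - m)) / Z := by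
            rw [hν]
            field_simp
          rw [hνa, Real.log_div (Real.exp_ne_zero _) hZpos.ne', Real.log_exp]
          ring
      calc S = ∑ a, (ν a * (θ * (f a - m)) - ν a * Real.log Z) :=
              Finset.sum_congr rfl fun a _ => h1 a
        _ = (∑ a, ν a * (θ * (f a - m))) - (∑ a, ν a) * Real.log Z := by
              rw [Finset.sum_sub_distrib, Finset.sum_mul]
        _ = (∑ a, (θ * (ν a * f a) - (θ * m) * ν a)) - Real.log Z := by
              rw [hν1, one_mul]
              congr 1
              exact Finset.sum_congr rfl fun a _ => by ring
        _ = (θ * ∑ a, ν a * f a) - (θ * m) * ∑ a, ν a - Real.log Z := by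
              rw [Finset.sum_sub_distrib, ← Finset.mul_sum, ← Finset.mul_sum]
        _ = θ * ((∑ a, ν a * f a) - m) - Real.log Z := by rw [hν1]; ring
    -- sqrt AM-GM bound
    have hcS : (0:ℝ) ≤ c * S := mul_nonneg hc.le hSnn
    have hu2 : Real.sqrt (c * S) ^ 2 = c * S := Real.sq_sqrt hcS
    have hsq : Real.sqrt (c * S) * |θ| ≤ c * θ ^ 2 / 4 + S := by
      have h2 : c * (Real.sqrt (c * S) * |θ|) ≤ c * (c * θ ^ 2 / 4 + S) := by
        have habs2 : c ^ 2 * |θ| ^ 2 = c ^ 2 * θ ^ 2 := by rw [sq_abs]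
        nlinarith [sq_nonneg (Real.sqrt (c * S) - c * |θ| / 2), hu2, habs2]
      exact (mul_le_mul_iff_right₀ hc).mp h2
    have hEg : |(∑ a, ν a * f a) - m| ≤ Real.sqrt (c * S) := hTC'
    have hlogZ : Real.log Z ≤ c * θ ^ 2 / 4 := by
      have h1 : θ * ((∑ a, ν a * f a) - m) ≤ |θ| * |(∑ a, ν a * f a) - m| := by
        rw [← abs_mul]
        exact le_abs_self _
      have h2 : |θ| * |(∑ a, ν a * f a) - m| ≤ |θ| * Real.sqrt (c * S) :=
        mul_le_mul_of_nonneg_left hEg (abs_nonneg θ)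
      have h3 : Real.log Z = θ * ((∑ a, ν a * f a) - m) - S := by linarith [hSeq]
      nlinarith [h1, h2, hsq]
    calc Z = Real.exp (Real.log Z) := (Real.exp_log hZpos).symm
      _ ≤ Real.exp (c * θ ^ 2 / 4) := Real.exp_le_exp.mpr hlogZ
  -- Chernoff step
  set θ := 2 * t / c with hθ
  have hθnn : 0 ≤ θ := by positivity
  have h1 : ∀ a ∈ Finset.univ.filter (fun a => t < |f a - m|),
      μ a ≤ μ a * Real.exp (θ * (f a - m) - θ * t)
            + μ a * Real.exp ((-θ) * (f a - m) - θ * t) := by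
    intro a ha
    rw [Finset.mem_filter] at ha
    rcases lt_abs.mp ha.2 with h | h
    · have he : 1 ≤ Real.exp (θ * (f a - m) - θ * t) :=
        Real.one_le_exp (by nlinarith)
      have := le_mul_of_one_le_right (hμ0 a) he
      have h2 : 0 ≤ μ a * Real.exp ((-θ) * (f a - m) - θ * t) :=
        mul_nonneg (hμ0 a) (Real.exp_pos _).le
      linarith
    · have he : 1 ≤ Real.exp ((-θ) * (f a - m) - θ * t) :=
        Real.one_le_exp (by nlinarith)
      have := le_mul_of_one_le_right (hμ0 a) he
      have h2 : 0 ≤ μ a * Real.exp (θ * (f a - m) - θ * t) :=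
        mul_nonneg (hμ0 a) (Real.exp_pos _).le
      linarith
  have hexp : ∀ (s : ℝ), Real.exp (s - θ * t) = Real.exp s * Real.exp (-(θ * t)) := by
    intro s; rw [← Real.exp_add]; ring_nf
  calc ∑ a ∈ Finset.univ.filter (fun a => t < |f a - m|), μ a
      ≤ ∑ a ∈ Finset.univ.filter (fun a => t < |f a - m|),
          (μ a * Real.exp (θ * (f a - m) - θ * t)
            + μ a * Real.exp ((-θ) * (f a - m) - θ * t)) := Finset.sum_le_sum h1
    _ ≤ ∑ a, (μ a * Real.exp (θ * (f a - m) - θ * t)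
            + μ a * Real.exp ((-θ) * (f a - m) - θ * t)) := by
          refine Finset.sum_le_sum_of_subset_of_nonneg (Finset.filter_subset _ _) ?_
          intro a _ _
          exact add_nonneg (mul_nonneg (hμ0 a) (Real.exp_pos _).le)
            (mul_nonneg (hμ0 a) (Real.exp_pos _).le)
    _ = (∑ a, μ a * Real.exp (θ * (f a - m))) * Real.exp (-(θ * t))
        + (∑ a, μ a * Real.exp ((-θ) * (f a - m))) * Real.exp (-(θ * t)) := by
          rw [Finset.sum_add_distrib, Finset.sum_mul, Finset.sum_mul]
          congr 1 <;> exact Finset.sum_congr rfl fun a _ => by rw [hexp]; ring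
    _ ≤ Real.exp (c * θ ^ 2 / 4) * Real.exp (-(θ * t))
        + Real.exp (c * (-θ) ^ 2 / 4) * Real.exp (-(θ * t)) := by
          gcongr
          · exact key θ
          · exact key (-θ)
    _ = 2 * Real.exp (-(t ^ 2) / c) := by
          rw [neg_sq, ← Real.exp_add]
          have : c * θ ^ 2 / 4 + -(θ * t) = -(t ^ 2) / c := by
            rw [hθ]; field_simp; ring
          rw [this]; ring
end
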